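/- Let P and Q be probability measures on ℝ^n with finite second moments, set μ_P := ∫ ξ dP, μ_Q := ∫ ξ dQ, Σ_P := ∫ ξξᵀ dP, Σ_Q := ∫ ξξᵀ dQ, and for x ∈ ℝ^n define D_x(P,Q) := xᵀ(Σ_Q − Σ_P)x − 2·(xᵀμ_P)·(xᵀ(μ_Q − μ_P)). Let μ̂ ∈ ℝ^n and B_Σ, B_μ ≥ 0, and assume ‖Σ_Q − Σ_P‖_op ≤ B_Σ (operator norm with respect to the Euclidean norm), ‖μ_Q − μ_P‖₂ ≤ B_μ, ‖μ_P − μ̂‖₂ ≤ B_μ, and ‖μ_Q − μ̂‖₂ ≤ B_μ. Then for all x, y in the unit simplex Δ_n: D_x(P,Q) − D_y(P,Q) ≤ 2·(B_Σ + 2·(B_μ + ‖μ̂‖₂)² + B_μ²)·‖x − y‖₂. -/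

import Mathlib

open MeasureTheory Set
open scoped BigOperators

/-- The mean `μ_P = ∫ ξ dP`. -/
noncomputable def meanVec {n : ℕ} (P : Measure (EuclideanSpace ℝ (Fin n))) :
    EuclideanSpace ℝ (Fin n) :=
  ∫ ξ, ξ ∂P

/-- The second-moment matrix `Σ_P = ∫ ξξᵀ dP` (entrywise). -/
noncomputable def secondMoment {n : ℕ} (P : Measure (EuclideanSpace ℝ (Fin n))) :
    Matrix (Fin n) (Fin n) ℝ :=
  Matrix.of fun i j => ∫ ξ, ξ i * ξ j ∂P

/-- The quadratic form `xᵀ A x`. -/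
noncomputable def quadForm {n : ℕ} (A : Matrix (Fin n) (Fin n) ℝ)
    (x : EuclideanSpace ℝ (Fin n)) : ℝ :=
  ∑ i, ∑ j, x i * A i j * x j

/-- The operator norm of a matrix with respect to the Euclidean norm. -/
noncomputable def euclideanOpNorm {n : ℕ} (A : Matrix (Fin n) (Fin n) ℝ) : ℝ :=
  ‖LinearMap.toContinuousLinearMap (Matrix.toEuclideanLin A)‖

/-- The G-derivative `D_x(P,Q) = xᵀ(Σ_Q − Σ_P)x − 2(xᵀμ_P)(xᵀ(μ_Q − μ_P))` of the
variance `V_x(P) = xᵀ(Σ_P − μ_Pμ_Pᵀ)x` at `P` in direction `Q`. -/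
noncomputable def varDeriv {n : ℕ} (x : EuclideanSpace ℝ (Fin n))
    (P Q : Measure (EuclideanSpace ℝ (Fin n))) : ℝ :=
  quadForm (secondMoment Q - secondMoment P) x -
    2 * (inner ℝ x (meanVec P) : ℝ) * (inner ℝ x (meanVec Q - meanVec P) : ℝ)

lemma simplex_norm_le' {n : ℕ} (x : EuclideanSpace ℝ (Fin n))
    (h0 : ∀ i, 0 ≤ x i) (h1 : ∑ i, x i = 1) : ‖x‖ ≤ 1 := by
  have hsq : ‖x‖ ^ 2 ≤ 1 := by
    rw [← real_inner_self_eq_norm_sq, PiLp.inner_apply]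
    calc ∑ i, (inner ℝ (x i) (x i) : ℝ) = ∑ i, x i * x i := by
          simp [RCLike.inner_apply, sq]
      _ ≤ ∑ i, x i * 1 := Finset.sum_le_sum fun i _ => by
          have : x i ≤ 1 := h1 ▸ Finset.single_le_sum (fun j _ => h0 j) (Finset.mem_univ i)
          nlinarith [h0 i]
      _ = 1 := by simpa using h1
  nlinarith [norm_nonneg x]

lemma quadForm_eq_inner {n : ℕ} (A : Matrix (Fin n) (Fin n) ℝ) (z : EuclideanSpace ℝ (Fin n)) :
    quadForm A z = (inner ℝ z (LinearMap.toContinuousLinearMap (Matrix.toEuclideanLin A) z) : ℝ) := by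
  rw [quadForm, PiLp.inner_apply]
  refine Finset.sum_congr rfl fun i _ => ?_
  simp only [RCLike.inner_apply, starRingEnd_apply, star_trivial]
  rw [LinearMap.coe_toContinuousLinearMap']
  show ∑ j, z i * A i j * z j = (A.mulVec fun j => z j) i * z i
  rw [Matrix.mulVec, dotProduct, Finset.sum_mul]
  exact Finset.sum_congr rfl fun j _ => by ring


/-- Lemma 6.2(ii) (continuity of the variance G-derivative): under the moment bounds
`‖Σ_Q−Σ_P‖_op ≤ B_Σ`, `‖μ_Q−μ_P‖₂ ≤ B_μ`, `‖μ_P−μ̂‖₂ ≤ B_μ`, `‖μ_Q−μ̂‖₂ ≤ B_μ`,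
the G-derivative of the variance is Lipschitz in `x` on the unit simplex with constant
`C₁ = 2(B_Σ + 2(B_μ + ‖μ̂‖₂)² + B_μ²)`. -/
theorem variance_G_derivative_lipschitz {n : ℕ}
    (P Q : Measure (EuclideanSpace ℝ (Fin n)))
    [IsProbabilityMeasure P] [IsProbabilityMeasure Q]
    (hP : Integrable (fun ξ => ‖ξ‖ ^ 2) P) (hQ : Integrable (fun ξ => ‖ξ‖ ^ 2) Q)
    (muhat : EuclideanSpace ℝ (Fin n)) (BSig Bμ : ℝ) (hBSig0 : 0 ≤ BSig) (hBμ0 : 0 ≤ Bμ)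
    (hSig : euclideanOpNorm (secondMoment Q - secondMoment P) ≤ BSig)
    (hμ : ‖meanVec Q - meanVec P‖ ≤ Bμ)
    (hμP : ‖meanVec P - muhat‖ ≤ Bμ)
    (hμQ : ‖meanVec Q - muhat‖ ≤ Bμ)
    (x y : EuclideanSpace ℝ (Fin n))
    (hx_nonneg : ∀ i, 0 ≤ x i) (hx_sum : ∑ i, x i = 1)
    (hy_nonneg : ∀ i, 0 ≤ y i) (hy_sum : ∑ i, y i = 1) :
    varDeriv x P Q - varDeriv y P Q ≤
      2 * (BSig + 2 * (Bμ + ‖muhat‖) ^ 2 + Bμ ^ 2) * ‖x - y‖ := by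
  set A := secondMoment Q - secondMoment P with hA
  set f := LinearMap.toContinuousLinearMap (Matrix.toEuclideanLin A) with hfdef
  set m := meanVec P with hm
  set d := meanVec Q - meanVec P with hd
  set t := ‖x - y‖ with ht
  have ht0 : 0 ≤ t := norm_nonneg _
  have hxn : ‖x‖ ≤ 1 := simplex_norm_le' x hx_nonneg hx_sum
  have hyn : ‖y‖ ≤ 1 := simplex_norm_le' y hy_nonneg hy_sum
  have hfB : ‖f‖ ≤ BSig := hSig
  set M := Bμ + ‖muhat‖ with hM
  have hM0 : 0 ≤ M := add_nonneg hBμ0 (norm_nonneg _)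
  have hmM : ‖m‖ ≤ M := by
    calc ‖m‖ = ‖(meanVec P - muhat) + muhat‖ := by rw [sub_add_cancel]
      _ ≤ ‖meanVec P - muhat‖ + ‖muhat‖ := norm_add_le _ _
      _ ≤ M := add_le_add hμP le_rfl
  -- quad part
  have hq : quadForm A x - quadForm A y
      = (inner ℝ (x - y) (f x) : ℝ) + (inner ℝ y (f (x - y)) : ℝ) := by
    rw [quadForm_eq_inner, quadForm_eq_inner, ← hfdef, map_sub, inner_sub_left, inner_sub_right]
    ring
  have hb1 : (inner ℝ (x - y) (f x) : ℝ) ≤ BSig * t := by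
    calc (inner ℝ (x - y) (f x) : ℝ) ≤ ‖x - y‖ * ‖f x‖ := real_inner_le_norm _ _
      _ ≤ t * (BSig * 1) := by
          refine mul_le_mul_of_nonneg_left ?_ ht0
          calc ‖f x‖ ≤ ‖f‖ * ‖x‖ := f.le_opNorm x
            _ ≤ BSig * 1 := mul_le_mul hfB hxn (norm_nonneg _) hBSig0
      _ = BSig * t := by ring
  have hb2 : (inner ℝ y (f (x - y)) : ℝ) ≤ BSig * t := by
    calc (inner ℝ y (f (x - y)) : ℝ) ≤ ‖y‖ * ‖f (x - y)‖ := real_inner_le_norm _ _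
      _ ≤ 1 * (BSig * t) := by
          refine mul_le_mul hyn ?_ (norm_nonneg _) zero_le_one
          calc ‖f (x - y)‖ ≤ ‖f‖ * ‖x - y‖ := f.le_opNorm _
            _ ≤ BSig * t := mul_le_mul_of_nonneg_right hfB ht0
      _ = BSig * t := by ring
  -- bilinear part
  have hsplit : (inner ℝ x m : ℝ) * (inner ℝ x d : ℝ) - (inner ℝ y m : ℝ) * (inner ℝ y d : ℝ)
      = (inner ℝ (x - y) m : ℝ) * (inner ℝ x d : ℝ) + (inner ℝ y m : ℝ) * (inner ℝ (x - y) d : ℝ) := by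
    rw [inner_sub_left, inner_sub_left]; ring
  have hp1 : |(inner ℝ (x - y) m : ℝ) * (inner ℝ x d : ℝ)| ≤ (t * M) * Bμ := by
    rw [abs_mul]
    refine mul_le_mul ?_ ?_ (abs_nonneg _) (by positivity)
    · calc |(inner ℝ (x - y) m : ℝ)| ≤ ‖x - y‖ * ‖m‖ := abs_real_inner_le_norm _ _
        _ ≤ t * M := mul_le_mul_of_nonneg_left hmM ht0
    · calc |(inner ℝ x d : ℝ)| ≤ ‖x‖ * ‖d‖ := abs_real_inner_le_norm _ _
        _ ≤ 1 * Bμ := mul_le_mul hxn hμ (norm_nonneg _) zero_le_one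
        _ = Bμ := one_mul _
  have hp2 : |(inner ℝ y m : ℝ) * (inner ℝ (x - y) d : ℝ)| ≤ M * (t * Bμ) := by
    rw [abs_mul]
    refine mul_le_mul ?_ ?_ (abs_nonneg _) hM0
    · calc |(inner ℝ y m : ℝ)| ≤ ‖y‖ * ‖m‖ := abs_real_inner_le_norm _ _
        _ ≤ 1 * M := mul_le_mul hyn hmM (norm_nonneg _) zero_le_one
        _ = M := one_mul _
    · calc |(inner ℝ (x - y) d : ℝ)| ≤ ‖x - y‖ * ‖d‖ := abs_real_inner_le_norm _ _
        _ ≤ t * Bμ := mul_le_mul_of_nonneg_left hμ ht0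
  have hDiff : varDeriv x P Q - varDeriv y P Q
      = (quadForm A x - quadForm A y)
        - 2 * ((inner ℝ x m : ℝ) * (inner ℝ x d : ℝ) - (inner ℝ y m : ℝ) * (inner ℝ y d : ℝ)) := by
    simp only [varDeriv, ← hA, ← hm, ← hd]; ring
  rw [hDiff, hq, hsplit]
  have h1 := abs_le.mp hp1
  have h2 := abs_le.mp hp2
  have hMB : Bμ ≤ M := le_add_of_nonneg_right (norm_nonneg _)
  nlinarith [mul_nonneg ht0 (mul_nonneg (sub_nonneg.2 hMB) hM0), mul_nonneg ht0 (sq_nonneg Bμ), h1.1, h2.1]
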